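/- arXiv:1509.04744 — 3 statements merged into one kernel-verified Lean document; each statement's English description precedes it below -/
import Mathlib

section
/- Let a₁, a₂, a₃ ∈ ℝ³ be three points that are not collinear (i.e., a₂ − a₁ and a₃ − a₁ are linearly independent). Then the stacked 9×6 matrix 𝔾 = [G(a₁); G(a₂); G(a₃)] with G(a) = [a^× −I] has full column rank 6. -/
open Matrix

noncomputable def hat (v : Fin 3 → ℝ) : Matrix (Fin 3) (Fin 3) ℝ :=
  !![0, -v 2, v 1; v 2, 0, -v 0; -v 1, v 0, 0]

noncomputable def Gmat (a : Fin 3 → ℝ) : Matrix (Fin 3) (Fin 3 ⊕ Fin 3) ℝ :=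
  Matrix.of fun i => Sum.elim (fun j => hat a i j) (fun j => -(1 : Matrix (Fin 3) (Fin 3) ℝ) i j)

/-- The stacked matrix 𝔾 = [G(a₁); G(a₂); G(a₃)]. -/
noncomputable def Gstack (a₁ a₂ a₃ : Fin 3 → ℝ) :
    Matrix (Fin 3 ⊕ (Fin 3 ⊕ Fin 3)) (Fin 3 ⊕ Fin 3) ℝ :=
  Matrix.of (Sum.elim (Gmat a₁) (Sum.elim (Gmat a₂) (Gmat a₃)))

lemma Gstack_apply (a₁ a₂ a₃ : Fin 3 → ℝ) (r c) :
    Gstack a₁ a₂ a₃ r c = Sum.elim (fun i => Gmat a₁ i c) (Sum.elim (fun i => Gmat a₂ i c) (fun i => Gmat a₃ i c)) r := by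
  rcases r with r | r | r <;> rfl

lemma Gmat_apply (a : Fin 3 → ℝ) (i c) :
    Gmat a i c = Sum.elim (fun j => hat a i j) (fun j => -(1 : Matrix (Fin 3) (Fin 3) ℝ) i j) c := rfl

lemma cross_eq_zero_of_pair (u w ω : Fin 3 → ℝ)
    (h : LinearIndependent ℝ ![u, w]) (hu : u ⨯₃ ω = 0) (hw : w ⨯₃ ω = 0) : ω = 0 := by
  by_contra hω
  have hud : ¬ LinearIndependent ℝ ![u, ω] := by
    intro hi
    exact (crossProduct_ne_zero_iff_linearIndependent.mpr hi) hu
  have hwd : ¬ LinearIndependent ℝ ![w, ω] := by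
    intro hi
    exact (crossProduct_ne_zero_iff_linearIndependent.mpr hi) hw
  rw [linearIndependent_fin2] at hud hwd
  simp only [Matrix.cons_val_one, Matrix.head_cons, Matrix.cons_val_zero, not_and_or,
    not_forall, not_not] at hud hwd
  obtain ⟨a, ha⟩ := hud.resolve_left (by simpa using hω)
  obtain ⟨b, hb⟩ := hwd.resolve_left (by simpa using hω)
  rw [linearIndependent_fin2] at h
  simp only [Matrix.cons_val_one, Matrix.head_cons, Matrix.cons_val_zero] at h
  rcases h with ⟨hw0, hab⟩
  have hb0 : b ≠ 0 := by
    rintro rfl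
    exact hw0 (by simpa using hb.symm)
  refine hab (a / b) ?_
  rw [← hb, ← ha, smul_smul, div_mul_cancel₀ _ hb0]

/-- For three non-collinear points, the stacked matrix 𝔾 has full column rank 6. -/
theorem Gstack_full_column_rank (a₁ a₂ a₃ : Fin 3 → ℝ)
    (h : LinearIndependent ℝ ![a₂ - a₁, a₃ - a₁]) :
    (Gstack a₁ a₂ a₃).rank = 6 := by
  classical
  set A := Gstack a₁ a₂ a₃ with hA
  have hinj : Function.Injective A.mulVecLin := by
    rw [← LinearMap.ker_eq_bot, LinearMap.ker_eq_bot']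
    intro x hx
    set ω : Fin 3 → ℝ := fun j => x (Sum.inl j) with hωdef
    set v : Fin 3 → ℝ := fun j => x (Sum.inr j) with hvdef
    have hx' : ∀ r, A.mulVec x r = 0 := fun r => congrFun hx r
    have h1 : a₁ ⨯₃ ω = v := by
      funext i
      have := hx' (Sum.inl i)
      fin_cases i <;>
        simp [hA, Gstack_apply, Gmat_apply, hat, mulVec, dotProduct, Fintype.sum_sum_type,
          Fin.sum_univ_three, cross_apply, hωdef, hvdef, Matrix.one_apply] at this ⊢ <;>
        linarith
    have h2 : a₂ ⨯₃ ω = v := by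
      funext i
      have := hx' (Sum.inr (Sum.inl i))
      fin_cases i <;>
        simp [hA, Gstack_apply, Gmat_apply, hat, mulVec, dotProduct, Fintype.sum_sum_type,
          Fin.sum_univ_three, cross_apply, hωdef, hvdef, Matrix.one_apply] at this ⊢ <;>
        linarith
    have h3 : a₃ ⨯₃ ω = v := by
      funext i
      have := hx' (Sum.inr (Sum.inr i))
      fin_cases i <;>
        simp [hA, Gstack_apply, Gmat_apply, hat, mulVec, dotProduct, Fintype.sum_sum_type,
          Fin.sum_univ_three, cross_apply, hωdef, hvdef, Matrix.one_apply] at this ⊢ <;>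
        linarith
    have hu : (a₂ - a₁) ⨯₃ ω = 0 := by
      rw [map_sub, LinearMap.sub_apply, h1, h2, sub_self]
    have hw : (a₃ - a₁) ⨯₃ ω = 0 := by
      rw [map_sub, LinearMap.sub_apply, h1, h3, sub_self]
    have hω : ω = 0 := cross_eq_zero_of_pair _ _ _ h hu hw
    have hv : v = 0 := by rw [← h1, hω, map_zero]
    funext r
    rcases r with j | j
    · exact congrFun hω j
    · exact congrFun hv j
  rw [Matrix.rank, LinearMap.finrank_range_of_inj hinj]
  simp [Module.finrank_fintype_fun_eq_card]
end

section
/- If a₁, a₂, a₃ ∈ ℝ³ are collinear, then the stacked matrix 𝔾 = [G(a₁); G(a₂); G(a₃)] with G(a) = [a^× −I] has rank at most 5; hence the rigid body velocity ξ ∈ ℝ⁶ is not uniquely determined by the equations G(aⱼ)ξ = vⱼ, j = 1,2,3. -/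
open Matrix

lemma Gmat_mulVec_kernel (p u : Fin 3 → ℝ) (r : ℝ) :
    (Gmat (r • u + p)).mulVec (Sum.elim u ((hat p).mulVec u)) = 0 := by
  funext i
  fin_cases i <;>
    simp [Gmat, hat, Matrix.mulVec, dotProduct, Fintype.sum_sum_type,
      Fin.sum_univ_succ, Matrix.one_apply] <;> ring

/-- If the three points are collinear then 𝔾 has rank at most 5, and the rigid body
velocity ξ is not uniquely determined by G(aⱼ)ξ = vⱼ, j = 1,2,3. -/
theorem Gstack_collinear_rank_le_five (a₁ a₂ a₃ : Fin 3 → ℝ)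
    (h : Collinear ℝ ({a₁, a₂, a₃} : Set (Fin 3 → ℝ))) :
    (Gstack a₁ a₂ a₃).rank ≤ 5 ∧
    ∃ ξ ξ' : Fin 3 ⊕ Fin 3 → ℝ, ξ ≠ ξ' ∧
      (Gmat a₁).mulVec ξ = (Gmat a₁).mulVec ξ' ∧
      (Gmat a₂).mulVec ξ = (Gmat a₂).mulVec ξ' ∧
      (Gmat a₃).mulVec ξ = (Gmat a₃).mulVec ξ' := by
  have hmem : a₁ ∈ ({a₁, a₂, a₃} : Set (Fin 3 → ℝ)) := by simp
  obtain ⟨v, hv⟩ := (collinear_iff_of_mem hmem).1 h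
  -- choose a nonzero direction u such that each aⱼ = rⱼ • u + a₁
  obtain ⟨u, hu0, hr⟩ : ∃ u : Fin 3 → ℝ, u ≠ 0 ∧
      ∀ x ∈ ({a₁, a₂, a₃} : Set (Fin 3 → ℝ)), ∃ r : ℝ, x = r • u + a₁ := by
    by_cases hv0 : v = 0
    · refine ⟨fun _ => 1, ?_, ?_⟩
      · intro hc; have := congrFun hc 0; simp at this
      · intro x hx
        obtain ⟨r, hrx⟩ := hv x hx
        exact ⟨0, by simp [hrx, hv0]⟩
    · exact ⟨v, hv0, hv⟩
  set ξ : Fin 3 ⊕ Fin 3 → ℝ := Sum.elim u ((hat a₁).mulVec u) with hξ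
  have hξ0 : ξ ≠ 0 := by
    intro hc
    apply hu0
    funext i
    have := congrFun hc (Sum.inl i)
    simpa [hξ] using this
  have hker : ∀ x ∈ ({a₁, a₂, a₃} : Set (Fin 3 → ℝ)), (Gmat x).mulVec ξ = 0 := by
    intro x hx
    obtain ⟨r, hrx⟩ := hr x hx
    rw [hrx, hξ]
    exact Gmat_mulVec_kernel a₁ u r
  have h1 : (Gmat a₁).mulVec ξ = 0 := hker a₁ (by simp)
  have h2 : (Gmat a₂).mulVec ξ = 0 := hker a₂ (by simp)
  have h3 : (Gmat a₃).mulVec ξ = 0 := hker a₃ (by simp)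
  constructor
  · -- rank bound via rank-nullity: ker is nontrivial
    have hstack : (Gstack a₁ a₂ a₃).mulVec ξ = 0 := by
      funext i
      rcases i with i | i | i
      · exact congrFun h1 i
      · exact congrFun h2 i
      · exact congrFun h3 i
    have hkerne : ξ ∈ LinearMap.ker (Gstack a₁ a₂ a₃).mulVecLin := by
      simpa [Matrix.mulVecLin_apply] using hstack
    have hkerbot : LinearMap.ker (Gstack a₁ a₂ a₃).mulVecLin ≠ ⊥ := by
      intro hc
      exact hξ0 (by simpa [hc] using hkerne)
    have hpos : 0 < Module.finrank ℝ (LinearMap.ker (Gstack a₁ a₂ a₃).mulVecLin) := by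
      rw [Module.finrank_pos_iff]
      exact Submodule.nontrivial_iff_ne_bot.2 hkerbot
    have hrn := LinearMap.finrank_range_add_finrank_ker (Gstack a₁ a₂ a₃).mulVecLin
    have hdim : Module.finrank ℝ (Fin 3 ⊕ Fin 3 → ℝ) = 6 := by
      simp [Module.finrank_pi]
    rw [hdim] at hrn
    have : (Gstack a₁ a₂ a₃).rank
        = Module.finrank ℝ (LinearMap.range (Gstack a₁ a₂ a₃).mulVecLin) := rfl
    omega
  · exact ⟨ξ, 0, hξ0, by simp [h1, h2, h3], by simp [h2], by simp [h3]⟩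
end

section
/- With D = RL, L ∈ ℝ^{3×n}, W symmetric positive definite, and U(R̂) = ½ trace((D − R̂L)ᵀ(D − R̂L)W): if rank(L) ≥ 2, then U(R̂) = 0 implies R̂ = R. -/
open Matrix

def SO3 (R : Matrix (Fin 3) (Fin 3) ℝ) : Prop := Rᵀ * R = 1 ∧ R.det = 1

lemma rows_mul_transpose (A : Matrix (Fin 3) (Fin 3) ℝ) (x y z : Fin 3 → ℝ) :
    Matrix.of ![x, y, z] * Aᵀ = Matrix.of ![A *ᵥ x, A *ᵥ y, A *ᵥ z] := by
  ext i j
  fin_cases i <;>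
    simp [Matrix.mul_apply, Matrix.mulVec, dotProduct, mul_comm]

lemma rot_cross (A : Matrix (Fin 3) (Fin 3) ℝ) (h1 : Aᵀ * A = 1) (h2 : A.det = 1)
    (u v : Fin 3 → ℝ) (hu : A *ᵥ u = u) (hv : A *ᵥ v = v) :
    A *ᵥ (crossProduct u v) = crossProduct u v := by
  have hAAT : A * Aᵀ = 1 := mul_eq_one_comm.mp h1
  have key : Aᵀ *ᵥ (crossProduct u v) = crossProduct u v := by
    apply dotProduct_eq
    intro x
    rw [dotProduct_comm, dotProduct_comm _ x]
    calc x ⬝ᵥ (Aᵀ *ᵥ (crossProduct u v))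
        = (x ᵥ* Aᵀ) ⬝ᵥ (crossProduct u v) := Matrix.dotProduct_mulVec x Aᵀ _
      _ = (A *ᵥ x) ⬝ᵥ (crossProduct u v) := by rw [Matrix.vecMul_transpose]
      _ = (A *ᵥ x) ⬝ᵥ (crossProduct (A *ᵥ u) (A *ᵥ v)) := by rw [hu, hv]
      _ = Matrix.det ![A *ᵥ x, A *ᵥ u, A *ᵥ v] := triple_product_eq_det _ _ _
      _ = Matrix.det (Matrix.of ![x, u, v] * Aᵀ) := by rw [rows_mul_transpose]; rfl
      _ = Matrix.det ![x, u, v] * A.det := by rw [Matrix.det_mul, Matrix.det_transpose]; rfl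
      _ = x ⬝ᵥ crossProduct u v := by rw [h2, mul_one, triple_product_eq_det]
  calc A *ᵥ (crossProduct u v) = A *ᵥ (Aᵀ *ᵥ (crossProduct u v)) := by rw [key]
    _ = (A * Aᵀ) *ᵥ (crossProduct u v) := Matrix.mulVec_mulVec _ _ _
    _ = crossProduct u v := by rw [hAAT, Matrix.one_mulVec]

/-- A rotation fixing two linearly independent vectors is the identity. -/
lemma rot_fix_two (A : Matrix (Fin 3) (Fin 3) ℝ) (h1 : Aᵀ * A = 1) (h2 : A.det = 1)
    (u v : Fin 3 → ℝ) (hli : LinearIndependent ℝ ![u, v])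
    (hu : A *ᵥ u = u) (hv : A *ᵥ v = v) : A = 1 := by
  set w := crossProduct u v with hwdef
  have hw : A *ᵥ w = w := rot_cross A h1 h2 u v hu hv
  have hwne : w ≠ 0 := crossProduct_ne_zero_iff_linearIndependent.mpr hli
  set P : Matrix (Fin 3) (Fin 3) ℝ := (Matrix.of ![u, v, w])ᵀ with hP
  have hdet : P.det ≠ 0 := by
    have hPdet : P.det = w ⬝ᵥ w := by
      have h3 : Matrix.det ![u, v, w] = w ⬝ᵥ w := by
        rw [← triple_product_eq_det, triple_product_permutation,
          triple_product_permutation, ← hwdef]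
      calc P.det = Matrix.det ![u, v, w] := Matrix.det_transpose _
        _ = w ⬝ᵥ w := h3
    rw [hPdet]
    exact fun h => hwne (dotProduct_self_eq_zero.mp h)
  have hAP : A * P = P := by
    have : (Matrix.of ![u, v, w]) * Aᵀ = Matrix.of ![u, v, w] := by
      rw [rows_mul_transpose, hu, hv, hw]
    calc A * P = ((Matrix.of ![u, v, w]) * Aᵀ)ᵀ := by
          rw [Matrix.transpose_mul, Matrix.transpose_transpose, hP]
      _ = P := by rw [this, hP]
  have hPinv : P * P⁻¹ = 1 := Matrix.mul_nonsing_inv P (isUnit_iff_ne_zero.mpr hdet)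
  calc A = A * (P * P⁻¹) := by rw [hPinv, mul_one]
    _ = (A * P) * P⁻¹ := by rw [mul_assoc]
    _ = P * P⁻¹ := by rw [hAP]
    _ = 1 := hPinv

/-- If rank(L) ≥ 2, the minimum of Wahba's cost function is unique:
U(R̂) = 0 implies R̂ = R. -/
theorem wahba_unique_minimum {n : ℕ}
    (R R' : Matrix (Fin 3) (Fin 3) ℝ) (hR : SO3 R) (hR' : SO3 R')
    (D L : Matrix (Fin 3) (Fin n) ℝ) (hD : D = R * L) (hL : 2 ≤ L.rank)
    (W : Matrix (Fin n) (Fin n) ℝ) (hW : W.PosDef)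
    (U : Matrix (Fin 3) (Fin 3) ℝ → ℝ)
    (hU : ∀ R₀, U R₀ = (1 / 2) * ((D - R₀ * L)ᵀ * (D - R₀ * L) * W).trace)
    (hzero : U R' = 0) : R' = R := by
  -- Step 1: the zero cost forces D = R' * L.
  set M : Matrix (Fin 3) (Fin n) ℝ := D - R' * L with hMdef
  have htr : (Mᵀ * M * W).trace = 0 := by
    have := hU R'
    rw [hzero] at this
    linarith [this]
  have hsum : (Mᵀ * M * W).trace = ∑ i : Fin 3, (M i) ⬝ᵥ (W *ᵥ (M i)) := by
    rw [Matrix.trace_mul_cycle, Matrix.trace_mul_comm]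
    simp only [Matrix.trace, Matrix.diag, Matrix.mul_apply, dotProduct,
      Matrix.mulVec, Matrix.transpose_apply]
  have hnonneg : ∀ i : Fin 3, 0 ≤ (M i) ⬝ᵥ (W *ᵥ (M i)) := by
    intro i
    have := hW.posSemidef.dotProduct_mulVec_nonneg (M i)
    simpa using this
  have hrows : ∀ i : Fin 3, M i = 0 := by
    intro i
    by_contra h
    have hpos := hW.dotProduct_mulVec_pos h
    rw [star_trivial] at hpos
    have hzero' : (M i) ⬝ᵥ (W *ᵥ (M i)) = 0 := by
      have h0 : ∑ i : Fin 3, (M i) ⬝ᵥ (W *ᵥ (M i)) = 0 := by rw [← hsum]; exact htr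
      have := (Finset.sum_eq_zero_iff_of_nonneg (fun i _ => hnonneg i)).mp h0 i (Finset.mem_univ i)
      exact this
    linarith
  have hM0 : M = 0 := by
    ext i j; exact congrFun (hrows i) j
  have hDR' : D = R' * L := sub_eq_zero.mp hM0
  have hRL : R * L = R' * L := hD.symm.trans hDR'
  -- Step 2: A := Rᵀ * R' is a rotation fixing the column space of L.
  set A : Matrix (Fin 3) (Fin 3) ℝ := Rᵀ * R' with hA
  have hRRT : R * Rᵀ = 1 := mul_eq_one_comm.mp hR.1
  have hAL : A * L = L := by
    calc A * L = Rᵀ * (R' * L) := by rw [hA, Matrix.mul_assoc]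
      _ = Rᵀ * (R * L) := by rw [hRL]
      _ = (Rᵀ * R) * L := (Matrix.mul_assoc _ _ _).symm
      _ = L := by rw [hR.1, Matrix.one_mul]
  have hAorth : Aᵀ * A = 1 := by
    rw [hA, Matrix.transpose_mul, Matrix.transpose_transpose]
    calc R'ᵀ * Rᵀᵀ * (Rᵀ * R') = R'ᵀ * (R * (Rᵀ * R')) := by
          rw [Matrix.transpose_transpose, Matrix.mul_assoc]
      _ = R'ᵀ * ((R * Rᵀ) * R') := by rw [Matrix.mul_assoc]
      _ = R'ᵀ * R' := by rw [hRRT, Matrix.one_mul]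
      _ = 1 := hR'.1
  have hAdet : A.det = 1 := by
    rw [hA, Matrix.det_mul, Matrix.det_transpose, hR.2, hR'.2, mul_one]
  -- Step 3: the kernel of A - 1 contains the column space of L, so has dimension ≥ 2.
  have hker : LinearMap.range L.mulVecLin ≤ LinearMap.ker (A - 1).mulVecLin := by
    rintro y ⟨x, rfl⟩
    simp only [LinearMap.mem_ker, Matrix.mulVecLin_apply]
    have hz : (A - 1) * L = 0 := by rw [Matrix.sub_mul, hAL, Matrix.one_mul, sub_self]
    rw [Matrix.mulVec_mulVec, hz, Matrix.zero_mulVec]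
  have hK2 : 2 ≤ Module.finrank ℝ (LinearMap.ker (A - 1).mulVecLin) :=
    le_trans hL (Submodule.finrank_mono hker)
  obtain ⟨f, hf⟩ := exists_linearIndependent_of_le_finrank (R := ℝ) hK2
  have hfix : ∀ i : Fin 2, A *ᵥ (f i : Fin 3 → ℝ) = (f i : Fin 3 → ℝ) := by
    intro i
    have hm : (A - 1) *ᵥ (f i : Fin 3 → ℝ) = 0 := (f i).2
    rwa [Matrix.sub_mulVec, Matrix.one_mulVec, sub_eq_zero] at hm
  have hli : LinearIndependent ℝ ![(f 0 : Fin 3 → ℝ), (f 1 : Fin 3 → ℝ)] := by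
    have h2 := hf.map' _ (Submodule.ker_subtype (LinearMap.ker (A - 1).mulVecLin))
    have heq : ![(f 0 : Fin 3 → ℝ), (f 1 : Fin 3 → ℝ)] =
        (LinearMap.ker (A - 1).mulVecLin).subtype ∘ f := by
      funext i; fin_cases i <;> rfl
    rw [heq]; exact h2
  have hA1 : A = 1 := rot_fix_two A hAorth hAdet _ _ hli (hfix 0) (hfix 1)
  calc R' = (R * Rᵀ) * R' := by rw [hRRT, Matrix.one_mul]
    _ = R * A := by rw [hA, mul_assoc]
    _ = R := by rw [hA1, Matrix.mul_one]
end
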